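/- Let d > 0, k ≥ 2 an integer, and x, z ∈ (−d, d). Then ∫_d^{kd} (y − x)^{−1/2}(2kd + z − y)^{−1/2} dy ≤ 2 and ∫_{kd}^{(2k−1)d} (y − x)^{−1/2}(2kd + z − y)^{−1/2} dy ≤ 2; consequently ∫_d^{(2k−1)d} e^{−a(y−x)}(y−x)^{−1/2} e^{−a(2kd+z−y)}(2kd+z−y)^{−1/2} dy ≤ 4 e^{−a(2kd + z − x)} for every a > 0. -/

import Mathlib

open Real

set_option linter.unreachableTactic false
set_option linter.unusedTactic false


lemma sqrt_ne (u : ℝ) (h : 0 < u) : Real.sqrt u ≠ 0 := ne_of_gt (Real.sqrt_pos.mpr h)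

lemma myIntble (x c lo hi : ℝ) (hx : x < lo) (h : lo ≤ hi) (hc : hi < c) :
    IntervalIntegrable (fun y => 1 / (Real.sqrt (y - x) * Real.sqrt (c - y)))
      MeasureTheory.volume lo hi := by
  apply ContinuousOn.intervalIntegrable
  apply ContinuousOn.div continuousOn_const
  · exact (((continuous_id.sub continuous_const).sqrt).mul
      ((continuous_const.sub continuous_id).sqrt)).continuousOn
  · intro y hy
    rw [Set.uIcc_of_le h] at hy
    exact mul_ne_zero (sqrt_ne _ (by have := hy.1; first | linarith | (simp only [id_eq]; linarith) | (show 0 < _; simp only [id_eq, Pi.sub_apply]; linarith)))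
      (sqrt_ne _ (by have := hy.2; first | linarith | (simp only [id_eq]; linarith) | (show 0 < _; simp only [id_eq, Pi.sub_apply]; linarith)))

lemma int_inv_sqrt_left (x lo hi : ℝ) (hx : x < lo) (h : lo ≤ hi) :
    ∫ y in lo..hi, 1 / Real.sqrt (y - x)
      = 2 * Real.sqrt (hi - x) - 2 * Real.sqrt (lo - x) := by
  rw [intervalIntegral.integral_eq_sub_of_hasDerivAt (f := fun t => 2 * Real.sqrt (t - x))]
  · intro y hy
    rw [Set.uIcc_of_le h] at hy
    have hyx : 0 < y - x := by have := hy.1; linarith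
    have h1 := (Real.hasDerivAt_sqrt (ne_of_gt hyx)).comp y ((hasDerivAt_id y).sub_const x)
    have h2 := h1.const_mul 2
    convert h2 using 1
    · rfl
    · rfl
    · field_simp
  · apply ContinuousOn.intervalIntegrable
    apply ContinuousOn.div continuousOn_const ((continuous_id.sub continuous_const).sqrt).continuousOn
    intro y hy
    rw [Set.uIcc_of_le h] at hy
    exact sqrt_ne _ (by have := hy.1; first | linarith | (simp only [id_eq]; linarith) | (show 0 < _; simp only [id_eq, Pi.sub_apply]; linarith))

lemma int_inv_sqrt_right (c lo hi : ℝ) (hc : hi < c) (h : lo ≤ hi) :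
    ∫ y in lo..hi, 1 / Real.sqrt (c - y)
      = 2 * Real.sqrt (c - lo) - 2 * Real.sqrt (c - hi) := by
  rw [intervalIntegral.integral_eq_sub_of_hasDerivAt (f := fun t => -2 * Real.sqrt (c - t))]
  · ring
  · intro y hy
    rw [Set.uIcc_of_le h] at hy
    have hyx : 0 < c - y := by have := hy.2; linarith
    have h1 := (Real.hasDerivAt_sqrt (ne_of_gt hyx)).comp y ((hasDerivAt_id y).const_sub c)
    have h2 := h1.const_mul (-2)
    convert h2 using 1
    · rfl
    · rfl
    · field_simp
  · apply ContinuousOn.intervalIntegrable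
    apply ContinuousOn.div continuousOn_const ((continuous_const.sub continuous_id).sqrt).continuousOn
    intro y hy
    rw [Set.uIcc_of_le h] at hy
    exact sqrt_ne _ (by have := hy.2; first | linarith | (simp only [id_eq]; linarith) | (show 0 < _; simp only [id_eq, Pi.sub_apply]; linarith))

lemma boundA (x c lo hi : ℝ) (hx : x < lo) (h : lo ≤ hi) (hc : hi < c) :
    (∫ y in lo..hi, 1 / (Real.sqrt (y - x) * Real.sqrt (c - y)))
      ≤ (2 * Real.sqrt (hi - x) - 2 * Real.sqrt (lo - x)) / Real.sqrt (c - hi) := by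
  have hchi : 0 < Real.sqrt (c - hi) := Real.sqrt_pos.mpr (by linarith)
  have step : (∫ y in lo..hi, 1 / (Real.sqrt (y - x) * Real.sqrt (c - y)))
      ≤ ∫ y in lo..hi, (1 / Real.sqrt (c - hi)) * (1 / Real.sqrt (y - x)) := by
    apply intervalIntegral.integral_mono_on h (myIntble x c lo hi hx h hc)
    · apply ContinuousOn.intervalIntegrable
      apply ContinuousOn.mul continuousOn_const
      apply ContinuousOn.div continuousOn_const
        ((continuous_id.sub continuous_const).sqrt).continuousOn
      intro y hy
      rw [Set.uIcc_of_le h] at hy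
      exact sqrt_ne _ (by have := hy.1; first | linarith | (simp only [id_eq]; linarith) | (show 0 < _; simp only [id_eq, Pi.sub_apply]; linarith))
    · intro y hy
      have hyx : 0 < Real.sqrt (y - x) := Real.sqrt_pos.mpr (by have := hy.1; first | linarith | (simp only [id_eq]; linarith) | (show 0 < _; simp only [id_eq, Pi.sub_apply]; linarith))
      have hcy : 0 < Real.sqrt (c - y) := Real.sqrt_pos.mpr (by have := hy.2; first | linarith | (simp only [id_eq]; linarith) | (show 0 < _; simp only [id_eq, Pi.sub_apply]; linarith))
      rw [show (1 / Real.sqrt (c - hi)) * (1 / Real.sqrt (y - x))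
          = 1 / (Real.sqrt (y - x) * Real.sqrt (c - hi)) by ring]
      apply one_div_le_one_div_of_le (by positivity)
      exact mul_le_mul_of_nonneg_left
        (Real.sqrt_le_sqrt (by have := hy.2; first | linarith | (simp only [id_eq]; linarith) | (show 0 < _; simp only [id_eq, Pi.sub_apply]; linarith))) hyx.le
  calc (∫ y in lo..hi, 1 / (Real.sqrt (y - x) * Real.sqrt (c - y)))
      ≤ ∫ y in lo..hi, (1 / Real.sqrt (c - hi)) * (1 / Real.sqrt (y - x)) := step
    _ = (1 / Real.sqrt (c - hi)) * ∫ y in lo..hi, 1 / Real.sqrt (y - x) :=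
        intervalIntegral.integral_const_mul _ _
    _ = (2 * Real.sqrt (hi - x) - 2 * Real.sqrt (lo - x)) / Real.sqrt (c - hi) := by
        rw [int_inv_sqrt_left x lo hi hx h]; ring

lemma boundB (x c lo hi : ℝ) (hx : x < lo) (h : lo ≤ hi) (hc : hi < c) :
    (∫ y in lo..hi, 1 / (Real.sqrt (y - x) * Real.sqrt (c - y)))
      ≤ (2 * Real.sqrt (c - lo) - 2 * Real.sqrt (c - hi)) / Real.sqrt (lo - x) := by
  have hlox : 0 < Real.sqrt (lo - x) := Real.sqrt_pos.mpr (by linarith)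
  have step : (∫ y in lo..hi, 1 / (Real.sqrt (y - x) * Real.sqrt (c - y)))
      ≤ ∫ y in lo..hi, (1 / Real.sqrt (lo - x)) * (1 / Real.sqrt (c - y)) := by
    apply intervalIntegral.integral_mono_on h (myIntble x c lo hi hx h hc)
    · apply ContinuousOn.intervalIntegrable
      apply ContinuousOn.mul continuousOn_const
      apply ContinuousOn.div continuousOn_const
        ((continuous_const.sub continuous_id).sqrt).continuousOn
      intro y hy
      rw [Set.uIcc_of_le h] at hy
      exact sqrt_ne _ (by have := hy.2; first | linarith | (simp only [id_eq]; linarith) | (show 0 < _; simp only [id_eq, Pi.sub_apply]; linarith))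
    · intro y hy
      have hyx : 0 < Real.sqrt (y - x) := Real.sqrt_pos.mpr (by have := hy.1; first | linarith | (simp only [id_eq]; linarith) | (show 0 < _; simp only [id_eq, Pi.sub_apply]; linarith))
      have hcy : 0 < Real.sqrt (c - y) := Real.sqrt_pos.mpr (by have := hy.2; first | linarith | (simp only [id_eq]; linarith) | (show 0 < _; simp only [id_eq, Pi.sub_apply]; linarith))
      rw [show (1 / Real.sqrt (lo - x)) * (1 / Real.sqrt (c - y))
          = 1 / (Real.sqrt (lo - x) * Real.sqrt (c - y)) by ring]
      apply one_div_le_one_div_of_le (by positivity)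
      exact mul_le_mul_of_nonneg_right
        (Real.sqrt_le_sqrt (by have := hy.1; first | linarith | (simp only [id_eq]; linarith) | (show 0 < _; simp only [id_eq, Pi.sub_apply]; linarith))) hcy.le
  calc (∫ y in lo..hi, 1 / (Real.sqrt (y - x) * Real.sqrt (c - y)))
      ≤ ∫ y in lo..hi, (1 / Real.sqrt (lo - x)) * (1 / Real.sqrt (c - y)) := step
    _ = (1 / Real.sqrt (lo - x)) * ∫ y in lo..hi, 1 / Real.sqrt (c - y) :=
        intervalIntegral.integral_const_mul _ _
    _ = (2 * Real.sqrt (c - lo) - 2 * Real.sqrt (c - hi)) / Real.sqrt (lo - x) := by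
        rw [int_inv_sqrt_right c lo hi hc h]; ring

set_option maxHeartbeats 1000000 in
/-- middle-range convolution estimates I_{k,2}. -/
theorem stmt14 (a d : ℝ) (k : ℕ) (hd : 0 < d) (hk : 2 ≤ k) (ha : 0 < a)
    (x z : ℝ) (hx : x ∈ Set.Ioo (-d) d) (hz : z ∈ Set.Ioo (-d) d) :
    (∫ y in d..((k : ℝ) * d),
        1 / (Real.sqrt (y - x) * Real.sqrt (2 * (k : ℝ) * d + z - y)) ≤ 2) ∧
      (∫ y in ((k : ℝ) * d)..((2 * (k : ℝ) - 1) * d),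
          1 / (Real.sqrt (y - x) * Real.sqrt (2 * (k : ℝ) * d + z - y)) ≤ 2) ∧
        ∫ y in d..((2 * (k : ℝ) - 1) * d),
            Real.exp (-a * (y - x)) / Real.sqrt (y - x) *
              (Real.exp (-a * (2 * (k : ℝ) * d + z - y)) /
                Real.sqrt (2 * (k : ℝ) * d + z - y)) ≤
          4 * Real.exp (-a * (2 * (k : ℝ) * d + z - x)) := by
  obtain ⟨hx1, hx2⟩ := hx
  obtain ⟨hz1, hz2⟩ := hz
  set K : ℝ := (k : ℝ) with hKdef
  have hK : (2:ℝ) ≤ K := by rw [hKdef]; exact_mod_cast hk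
  have h1 : d < K * d := by nlinarith
  have h2 : K * d < (2 * K - 1) * d := by nlinarith
  have h3 : (2 * K - 1) * d < 2 * K * d + z := by nlinarith
  have hxd : x < d := hx2
  -- first integral
  have P1 : (∫ y in d..(K * d),
      1 / (Real.sqrt (y - x) * Real.sqrt (2 * K * d + z - y))) ≤ 2 := by
    have hb := boundA x (2 * K * d + z) d (K * d) hxd h1.le (by nlinarith)
    refine hb.trans ?_
    have hC : 0 < Real.sqrt (2 * K * d + z - K * d) := Real.sqrt_pos.mpr (by nlinarith)
    rw [div_le_iff₀ hC]
    have hBC : Real.sqrt (K * d - x)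
        ≤ Real.sqrt (d - x) + Real.sqrt (2 * K * d + z - K * d) := by
      have hle : K * d - x ≤ (Real.sqrt (d - x) + Real.sqrt (2 * K * d + z - K * d))^2 := by
        nlinarith [Real.sq_sqrt (show (0:ℝ) ≤ d - x by linarith),
          Real.sq_sqrt (show (0:ℝ) ≤ 2 * K * d + z - K * d by nlinarith),
          mul_nonneg (Real.sqrt_nonneg (d - x)) (Real.sqrt_nonneg (2 * K * d + z - K * d))]
      calc Real.sqrt (K * d - x)
          ≤ Real.sqrt ((Real.sqrt (d - x) + Real.sqrt (2 * K * d + z - K * d))^2) :=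
            Real.sqrt_le_sqrt hle
        _ = Real.sqrt (d - x) + Real.sqrt (2 * K * d + z - K * d) :=
            Real.sqrt_sq (by positivity)
    linarith
  -- second integral
  have P2 : (∫ y in (K * d)..((2 * K - 1) * d),
      1 / (Real.sqrt (y - x) * Real.sqrt (2 * K * d + z - y))) ≤ 2 := by
    have hb := boundB x (2 * K * d + z) (K * d) ((2 * K - 1) * d)
      (by linarith) h2.le h3
    refine hb.trans ?_
    have hC : 0 < Real.sqrt (K * d - x) := Real.sqrt_pos.mpr (by linarith)
    rw [div_le_iff₀ hC]
    have hBC : Real.sqrt (2 * K * d + z - K * d)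
        ≤ Real.sqrt (2 * K * d + z - (2 * K - 1) * d) + Real.sqrt (K * d - x) := by
      have hle : 2 * K * d + z - K * d
          ≤ (Real.sqrt (2 * K * d + z - (2 * K - 1) * d) + Real.sqrt (K * d - x))^2 := by
        nlinarith [Real.sq_sqrt (show (0:ℝ) ≤ 2 * K * d + z - (2 * K - 1) * d by nlinarith),
          Real.sq_sqrt (show (0:ℝ) ≤ K * d - x by linarith),
          mul_nonneg (Real.sqrt_nonneg (2 * K * d + z - (2 * K - 1) * d))
            (Real.sqrt_nonneg (K * d - x))]
      calc Real.sqrt (2 * K * d + z - K * d)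
          ≤ Real.sqrt ((Real.sqrt (2 * K * d + z - (2 * K - 1) * d)
              + Real.sqrt (K * d - x))^2) := Real.sqrt_le_sqrt hle
        _ = Real.sqrt (2 * K * d + z - (2 * K - 1) * d) + Real.sqrt (K * d - x) :=
            Real.sqrt_sq (by positivity)
    linarith
  refine ⟨P1, P2, ?_⟩
  -- third integral
  have hcongr : Set.EqOn
      (fun y => Real.exp (-a * (y - x)) / Real.sqrt (y - x) *
        (Real.exp (-a * (2 * K * d + z - y)) / Real.sqrt (2 * K * d + z - y)))
      (fun y => Real.exp (-a * (2 * K * d + z - x)) *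
        (1 / (Real.sqrt (y - x) * Real.sqrt (2 * K * d + z - y))))
      (Set.uIcc d ((2 * K - 1) * d)) := by
    intro y _
    simp only
    rw [div_mul_div_comm, ← Real.exp_add,
      show -a * (y - x) + -a * (2 * K * d + z - y) = -a * (2 * K * d + z - x) by ring,
      mul_one_div]
  rw [intervalIntegral.integral_congr hcongr, intervalIntegral.integral_const_mul]
  have hsplit : (∫ y in d..((2 * K - 1) * d),
      1 / (Real.sqrt (y - x) * Real.sqrt (2 * K * d + z - y)))
      = (∫ y in d..(K * d), 1 / (Real.sqrt (y - x) * Real.sqrt (2 * K * d + z - y)))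
        + ∫ y in (K * d)..((2 * K - 1) * d),
            1 / (Real.sqrt (y - x) * Real.sqrt (2 * K * d + z - y)) :=
    (intervalIntegral.integral_add_adjacent_intervals
      (myIntble x (2 * K * d + z) d (K * d) hxd h1.le (by nlinarith))
      (myIntble x (2 * K * d + z) (K * d) ((2 * K - 1) * d) (by linarith) h2.le h3)).symm
  rw [hsplit]
  have he : (0:ℝ) ≤ Real.exp (-a * (2 * K * d + z - x)) := (Real.exp_pos _).le
  nlinarith [mul_le_mul_of_nonneg_left (add_le_add P1 P2) he]
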